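/- Let (X,F) be a symmetric n-ary band. For every x, y ∈ X the following conditions are equivalent: (i) B(x,y) = y and B(y,x) = x (i.e., x σ y); (ii) ℓ_x = ℓ_y; (iii) there exist t, t' ∈ X with y = ℓ_x(t) and x = ℓ_y(t'); (iv) there exist x₂,…,xₙ, y₂,…,yₙ ∈ X with y = F(x, x₂,…,xₙ) and x = F(y, y₂,…,yₙ). -/

import Mathlib

namespace NaryBand

variable {X : Type*}

/-- Replace the window of length `n` starting at position `i` (0-based) of the
`(2*n-1)`-tuple `x` by the value of `F` on that window. -/
def contract {n : ℕ} (F : (Fin n → X) → X) (i : ℕ) (hn : 2 ≤ n) (hi : i ≤ n - 1)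
    (x : Fin (2 * n - 1) → X) : Fin n → X :=
  fun j =>
    if _h1 : (j : ℕ) < i then x ⟨(j : ℕ), by have := j.isLt; omega⟩
    else if _h2 : (j : ℕ) = i then
      F (fun k => x ⟨i + (k : ℕ), by have := k.isLt; omega⟩)
    else x ⟨(j : ℕ) + n - 1, by have := j.isLt; omega⟩

/-- `F` is an associative `n`-ary operation. -/
def NAssoc {n : ℕ} (hn : 2 ≤ n) (F : (Fin n → X) → X) : Prop :=
  ∀ (i : ℕ) (hi : i + 1 ≤ n - 1) (x : Fin (2 * n - 1) → X),
    F (contract F i hn (by omega) x) = F (contract F (i + 1) hn (by omega) x)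

/-- `F` is a symmetric `n`-ary operation. -/
def NSym {n : ℕ} (F : (Fin n → X) → X) : Prop :=
  ∀ (σ : Equiv.Perm (Fin n)) (x : Fin n → X), F (x ∘ σ) = F x

/-- `F` is an idempotent `n`-ary operation. -/
def NIdem {n : ℕ} (F : (Fin n → X) → X) : Prop :=
  ∀ x : X, F (fun _ => x) = x

/-- The associated binary operation `B(x,y) = F(x,…,x,y)` (with `n-1` copies of `x`). -/
def assocB {n : ℕ} (F : (Fin n → X) → X) (x y : X) : X :=
  F (fun j => if (j : ℕ) < n - 1 then x else y)

/-- The map `ℓ_x : y ↦ B(x,y)`. -/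
def ell {n : ℕ} (F : (Fin n → X) → X) (x : X) : X → X :=
  fun y => assocB F x y

/-- The `n`-ary extension `G^{n-1}(x₁,…,xₙ) = G(x₁, G(x₂, …, G(x_{n-1}, xₙ)…))`
of a binary operation `G`. -/
def nExt {n : ℕ} (hn : 1 ≤ n) (G : X → X → X) (x : Fin n → X) : X :=
  (List.ofFn (fun i : Fin (n - 1) => x ⟨(i : ℕ), by have := i.isLt; omega⟩)).foldr G
    (x ⟨n - 1, by omega⟩)

/-- The relation `σ`: `x σ y` iff `B(x,y) = y` and `B(y,x) = x`. -/
def sigmaRel {n : ℕ} (F : (Fin n → X) → X) (x y : X) : Prop :=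
  assocB F x y = y ∧ assocB F y x = x

/-- `(A, mul)` is an abelian group with identity `e` and inversion `inv`. -/
def IsAbelianGroup {A : Type*} (mul : A → A → A) (e : A) (inv : A → A) : Prop :=
  (∀ a b c, mul (mul a b) c = mul a (mul b c)) ∧
  (∀ a b, mul a b = mul b a) ∧
  (∀ a, mul e a = a) ∧
  (∀ a, mul (inv a) a = e)

/-- `k`-fold product `a * ⋯ * a` with respect to `mul` (with `powMul mul e 0 a = e`). -/
def powMul {A : Type*} (mul : A → A → A) (e : A) : ℕ → A → A
  | 0, _ => e
  | k + 1, a => mul a (powMul mul e k a)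

-- auxiliary lemmas

lemma shift_lemma {n : ℕ} (hn : 2 ≤ n) (F : (Fin n → X) → X) (hA : NAssoc hn F)
    (z : Fin (2 * n - 1) → X) :
    ∀ i (hi : i ≤ n - 1),
      F (contract F 0 hn (Nat.zero_le _) z) = F (contract F i hn hi z) := by
  intro i
  induction i with
  | zero => intro _; rfl
  | succ k ih =>
    intro hi
    rw [ih (by omega)]
    exact hA k hi z

lemma absorb_lemma {n : ℕ} (hn : 2 ≤ n) (F : (Fin n → X) → X) (hA : NAssoc hn F)
    (a : X) (c : Fin n → X) :
    assocB F a (F c) =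
      F (fun j : Fin n => if (j : ℕ) = 0 then assocB F a (c ⟨0, Nat.lt_of_lt_of_le (by norm_num) hn⟩) else c j) := by
  have key := shift_lemma hn F hA
    (fun i : Fin (2 * n - 1) =>
      if (i : ℕ) < n - 1 then a else c ⟨(i : ℕ) - (n - 1), by have := i.isLt; omega⟩)
    (n - 1) (le_refl _)
  have hR : contract F (n - 1) hn (le_refl _)
      (fun i : Fin (2 * n - 1) =>
        if (i : ℕ) < n - 1 then a else c ⟨(i : ℕ) - (n - 1), by have := i.isLt; omega⟩)
      = fun j : Fin n => if (j : ℕ) < n - 1 then a else F c := by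
    funext j
    unfold contract
    by_cases h1 : (j : ℕ) < n - 1
    · rw [dif_pos h1]
      beta_reduce
      rw [if_pos h1, if_pos h1]
    · have hj : (j : ℕ) = n - 1 := by have := j.isLt; omega
      rw [dif_neg h1, dif_pos hj, if_neg h1]
      congr 1
      funext k
      beta_reduce
      rw [if_neg (by first | omega | (simp; omega) | simp)]
      congr 1
      exact Fin.ext (by first | omega | (simp; omega) | simp)
  have hL : contract F 0 hn (Nat.zero_le _)
      (fun i : Fin (2 * n - 1) =>
        if (i : ℕ) < n - 1 then a else c ⟨(i : ℕ) - (n - 1), by have := i.isLt; omega⟩)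
      = fun j : Fin n => if (j : ℕ) = 0 then assocB F a (c ⟨0, by omega⟩) else c j := by
    funext j
    unfold contract
    by_cases h0 : (j : ℕ) = 0
    · rw [dif_neg (by omega), dif_pos h0, if_pos h0]
      show F _ = assocB F a _
      rw [assocB]
      congr 1
      funext k
      beta_reduce
      by_cases hk : (k : ℕ) < n - 1
      · rw [if_pos (by first | omega | (simp; omega) | simp), if_pos hk]
      · rw [if_neg (by first | omega | (simp; omega) | simp), if_neg hk]
        congr 1
        exact Fin.ext (by first | omega | (simp; omega) | simp)
    · rw [dif_neg (by omega), dif_neg h0, if_neg h0]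
      beta_reduce
      rw [if_neg (by first | omega | (simp; omega) | simp)]
      congr 1
      exact Fin.ext (by first | omega | (simp; omega) | simp)
  rw [assocB, ← hR, ← key, hL]

lemma rot_lemma {n : ℕ} (hn : 2 ≤ n) (F : (Fin n → X) → X) (hS : NSym F) (a b : X) :
    assocB F a b = F (fun j : Fin n => if (j : ℕ) = 0 then b else a) := by
  have h := hS (Equiv.swap ⟨0, Nat.lt_of_lt_of_le (by norm_num) hn⟩ ⟨n - 1, by omega⟩)
    (fun j : Fin n => if (j : ℕ) < n - 1 then a else b)
  rw [assocB, ← h]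
  congr 1
  funext j
  simp only [Function.comp_apply, Equiv.swap_apply_def, Fin.ext_iff]
  split_ifs <;> simp_all <;> omega

lemma idemB {n : ℕ} (F : (Fin n → X) → X) (hI : NIdem F) (x : X) :
    assocB F x x = x := by
  have : (fun j : Fin n => if (j : ℕ) < n - 1 then x else x) = fun _ => x := by
    funext j; split_ifs <;> rfl
  rw [assocB, this, hI]

-- B x (F c) = F c when c 0 = ... absorbed forms
lemma absorb_eq {n : ℕ} (hn : 2 ≤ n) (F : (Fin n → X) → X) (hA : NAssoc hn F)
    (a : X) (c : Fin n → X) (h : assocB F a (c ⟨0, Nat.lt_of_lt_of_le (by norm_num) hn⟩) = c ⟨0, Nat.lt_of_lt_of_le (by norm_num) hn⟩) :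
    assocB F a (F c) = F c := by
  rw [absorb_lemma hn F hA a c, h]
  congr 1
  funext j
  by_cases h0 : (j : ℕ) = 0
  · rw [if_pos h0]; congr 1; exact Fin.ext (by simp [h0])
  · rw [if_neg h0]

lemma ell_comm {n : ℕ} (hn : 2 ≤ n) (F : (Fin n → X) → X) (hA : NAssoc hn F) (hS : NSym F)
    (x y z : X) : ell F x (ell F y z) = ell F y (ell F x z) := by
  have hd : ell F y z = F (fun j : Fin n => if (j : ℕ) = 0 then z else y) :=
    rot_lemma hn F hS y z
  show assocB F x (ell F y z) = assocB F y (assocB F x z)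
  rw [hd, absorb_lemma hn F hA x, rot_lemma hn F hS y (assocB F x z)]
  congr 1
  funext j
  by_cases h0 : (j : ℕ) = 0
  · rw [if_pos h0, if_pos h0]; congr 2
  · rw [if_neg h0, if_neg h0, if_neg h0]


end NaryBand

open NaryBand

/-- In a symmetric `n`-ary band, for all `x, y` the following are
equivalent: (i) `x σ y`; (ii) `ℓ_x = ℓ_y`; (iii) `y = ℓ_x(t)` and `x = ℓ_y(t')`
for some `t, t'`; (iv) `y = F(x,x₂,…,xₙ)` and `x = F(y,y₂,…,yₙ)` for some
`x₂,…,xₙ,y₂,…,yₙ`. -/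
theorem stmt_9 {X : Type*} {n : ℕ} (hn : 2 ≤ n) (F : (Fin n → X) → X)
    (hA : NAssoc hn F) (hS : NSym F) (hI : NIdem F) :
    ∀ x y : X,
      List.TFAE
        [sigmaRel F x y,
         ell F x = ell F y,
         ∃ t t' : X, y = ell F x t ∧ x = ell F y t',
         ∃ xs ys : Fin n → X, xs ⟨0, by omega⟩ = x ∧ ys ⟨0, by omega⟩ = y ∧
           y = F xs ∧ x = F ys] := by
  
  intro x y
  have habs : ∀ (u : X) (c : Fin n → X),
      assocB F u (c ⟨0, by omega⟩) = c ⟨0, by omega⟩ → assocB F u (F c) = F c :=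
    fun u c h => absorb_eq hn F hA u c h
  tfae_have 1 → 2 := by
    rintro ⟨hxy, hyx⟩
    funext z
    have L1 : ∀ u v : X, assocB F u v = v → ell F u (ell F v z) = ell F v z := by
      intro u v huv
      show assocB F u (F _) = F _
      apply habs
      · rw [if_pos (by omega : (0:ℕ) < n - 1)]
        exact huv
    have e1 : ell F y (ell F x z) = ell F x z := L1 y x hyx
    have e2 : ell F x (ell F y z) = ell F y z := L1 x y hxy
    calc ell F x z = ell F y (ell F x z) := e1.symm
      _ = ell F x (ell F y z) := (ell_comm hn F hA hS x y z).symm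
      _ = ell F y z := e2
  tfae_have 2 → 3 := by
    intro h
    refine ⟨y, x, ?_, ?_⟩
    · have : ell F x y = ell F y y := congrFun h y
      rw [this]
      exact (idemB F hI y).symm
    · have : ell F y x = ell F x x := (congrFun h x).symm
      rw [this]
      exact (idemB F hI x).symm
  tfae_have 3 → 4 := by
    rintro ⟨t, t', hy, hx⟩
    refine ⟨fun j => if (j : ℕ) < n - 1 then x else t,
            fun j => if (j : ℕ) < n - 1 then y else t', ?_, ?_, hy, hx⟩
    · exact if_pos (by first | omega | (simp; omega) | simp)
    · exact if_pos (by first | omega | (simp; omega) | simp)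
  tfae_have 4 → 1 := by
    rintro ⟨xs, ys, hx0, hy0, hy, hx⟩
    constructor
    · rw [hy]
      apply habs
      rw [hx0, idemB F hI]
    · rw [hx]
      apply habs
      rw [hy0, idemB F hI]
  tfae_finish
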